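/- Let T' be the Cayley graph of the free group F₂ = ⟨a,b⟩ where each edge [g,ga] has length 2 and each edge [g,gb] has length 1, and let Y = T' × ℝ with the product metric, with F₂ × ℤ acting by the natural product action and y₀ = (1,0). Define g₁ = ab and g_n = g_{n-1}a^{2^{n-1}} for n even, g_n = g_{n-1}b^{2^{n-1}} for n odd (n ≥ 2), and ḡ_n = (g_n, 2ⁿ) ∈ F₂ × ℤ. Then the word length of g_n in F₂ is 2ⁿ, the T'-distance d_{T'}(1, g_n) satisfies: d_{T'}(1,g_n)/2ⁿ does not converge as n → ∞ (it oscillates between values bounded away from each other), and consequently the sequence (ḡ_n · y₀) does not converge to a point of ∂Y in Y ∪ ∂Y. -/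

import Mathlib

open Metric Filter Topology

/-- The free group of rank 2, `F₂ = ⟨a, b⟩`. -/
abbrev F2 := FreeGroup Bool

/-- The generator `a` of `F₂`. -/
def fa : F2 := FreeGroup.of false

/-- The generator `b` of `F₂`. -/
def fb : F2 := FreeGroup.of true

/-- Word length of `w ∈ F₂` w.r.t. `{a, b}`. -/
def wlen (w : F2) : ℕ := (FreeGroup.toWord w).length

/-- Weighted word length of `w ∈ F₂`, where `a`-letters have length `2` and
`b`-letters have length `1`; this is the distance `d_{T'}(1, w)` in the Cayley graph
`T'` of `F₂` with `a`-edges of length `2` and `b`-edges of length `1`. -/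
def wlen2 (w : F2) : ℕ :=
  ((FreeGroup.toWord w).map (fun p => if p.1 then 1 else 2)).sum

/-- The sequence `g₁ = ab`, `gₙ = gₙ₋₁ a^{2^{n-1}}` for `n` even,
`gₙ = gₙ₋₁ b^{2^{n-1}}` for `n` odd (`n ≥ 2`). -/
def gseq : ℕ → F2
  | 0 => 1
  | 1 => fa * fb
  | (n + 2) => gseq (n + 1) * (if (n + 2) % 2 = 0 then fa ^ (2 ^ (n + 1)) else fb ^ (2 ^ (n + 1)))

/-- explicit word for `gseq` -/
def W : ℕ → List (Bool × Bool)
  | 0 => []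
  | 1 => [(false, true), (true, true)]
  | (n + 2) => W (n + 1) ++ List.replicate (2 ^ (n + 1)) ((if (n + 2) % 2 = 0 then false else true), true)

lemma W_pos : ∀ n, ∀ p ∈ W n, p.2 = true := by
  intro n
  induction n using W.induct with
  | case1 => simp [W]
  | case2 => simp [W]
  | case3 n ih =>
    intro p hp
    rw [W] at hp
    rcases List.mem_append.1 hp with h | h
    · exact ih p h
    · have := List.eq_of_mem_replicate h
      simp [this]

lemma reduce_eq_self {L : List (Bool × Bool)} (h : ∀ p ∈ L, p.2 = true) :
    FreeGroup.reduce L = L := by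
  induction L with
  | nil => rfl
  | cons x L ih =>
    have hL := ih (fun p hp => h p (List.mem_cons_of_mem _ hp))
    rw [FreeGroup.reduce.cons, hL]
    cases L with
    | nil => rfl
    | cons y tl =>
      have hx : x.2 = true := h x List.mem_cons_self
      have hy : y.2 = true := h y (List.mem_cons_of_mem _ List.mem_cons_self)
      simp [hx, hy]

lemma of_pow (x : Bool) (k : ℕ) :
    (FreeGroup.of x : F2) ^ k = FreeGroup.mk (List.replicate k (x, true)) := by
  induction k with
  | zero => simp [FreeGroup.one_eq_mk]
  | succ k ih =>
    rw [pow_succ, ih, FreeGroup.of, FreeGroup.mul_mk]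
    rw [List.replicate_succ' (n := k)]

lemma gseq_mk : ∀ n, gseq n = FreeGroup.mk (W n) := by
  intro n
  induction n using W.induct with
  | case1 => simp [gseq, W, FreeGroup.one_eq_mk]
  | case2 =>
    show fa * fb = _
    rw [fa, fb, FreeGroup.of, FreeGroup.of, FreeGroup.mul_mk]; rfl
  | case3 n ih =>
    rw [gseq, W, ih]
    by_cases h : (n + 2) % 2 = 0
    · have h' : n % 2 = 0 := by omega
      simp [h, h', fa, fb, of_pow, FreeGroup.mul_mk]
    · have h' : n % 2 = 1 := by omega
      simp [h, h', fa, fb, of_pow, FreeGroup.mul_mk]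

lemma toWord_gseq (n : ℕ) : (gseq n).toWord = W n := by
  rw [gseq_mk, FreeGroup.toWord_mk, reduce_eq_self (W_pos n)]

lemma W_length : ∀ n, (W (n + 1)).length = 2 ^ (n + 1) := by
  intro n
  induction n with
  | zero => rfl
  | succ n ih =>
    rw [W, List.length_append, ih, List.length_replicate]
    ring

lemma wlen_gseq (n : ℕ) (hn : 1 ≤ n) : wlen (gseq n) = 2 ^ n := by
  obtain ⟨m, rfl⟩ := Nat.exists_eq_add_of_le hn
  rw [wlen, toWord_gseq]
  rw [show 1 + m = m + 1 by ring]
  exact W_length m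

lemma wlen2_gseq : ∀ n, 3 * wlen2 (gseq (n + 1)) =
    (if (n + 1) % 2 = 0 then 5 else 4) * 2 ^ (n + 1) + 1 := by
  intro n
  induction n with
  | zero => rfl
  | succ n ih =>
    have hstep : wlen2 (gseq (n + 2)) = wlen2 (gseq (n + 1)) +
        (if (n + 2) % 2 = 0 then 2 else 1) * 2 ^ (n + 1) := by
      rw [wlen2, wlen2, toWord_gseq, toWord_gseq, W, List.map_append, List.sum_append]
      congr 1
      by_cases h : (n + 2) % 2 = 0
      · have h' : n % 2 = 0 := by omega
        simp [h, h', List.map_replicate, List.sum_replicate, mul_comm]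
      · have h' : n % 2 = 1 := by omega
        simp [h, h', List.map_replicate, List.sum_replicate, mul_comm]
    rw [hstep]
    have hpow : (2:ℕ) ^ (n + 2) = 2 * 2 ^ (n + 1) := by ring
    rcases Nat.mod_two_eq_zero_or_one (n + 1) with h | h
    · have h2 : (n + 2) % 2 = 1 := by omega
      rw [h] at ih
      simp only [h2]
      simp at ih ⊢
      omega
    · have h2 : (n + 2) % 2 = 0 := by omega
      rw [h] at ih
      simp only [h2]
      simp at ih ⊢
      omega

lemma key (c : ℕ) (φ : ℕ → ℕ) (hφ : Tendsto φ atTop atTop)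
    (h : ∀ k, 3 * wlen2 (gseq (φ k)) = c * 2 ^ (φ k) + 1) :
    Tendsto (fun k => (wlen2 (gseq (φ k)) : ℝ) / 2 ^ (φ k)) atTop (𝓝 ((c : ℝ) / 3)) := by
  have heq : ∀ k, (wlen2 (gseq (φ k)) : ℝ) / 2 ^ (φ k)
      = (c : ℝ) / 3 + (1/3) * (1/2) ^ (φ k) := by
    intro k
    have h3 : (3:ℝ) * (wlen2 (gseq (φ k)) : ℝ) = c * 2 ^ (φ k) + 1 := by exact_mod_cast h k
    have hp : ((2:ℝ)) ^ (φ k) ≠ 0 := pow_ne_zero _ two_ne_zero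
    have hw : (wlen2 (gseq (φ k)) : ℝ) = ((c : ℝ) * 2 ^ (φ k) + 1) / 3 := by linarith
    rw [hw, div_pow, one_pow]
    field_simp
  have h0 : Tendsto (fun k => ((1:ℝ)/2) ^ (φ k)) atTop (𝓝 0) :=
    (tendsto_pow_atTop_nhds_zero_of_lt_one (by norm_num) (by norm_num)).comp hφ
  have h1 : Tendsto (fun k => (c : ℝ) / 3 + (1/3) * (1/2) ^ (φ k)) atTop (𝓝 ((c:ℝ)/3 + (1/3) * 0)) :=
    tendsto_const_nhds.add (h0.const_mul (1/3))
  simp only [mul_zero, add_zero] at h1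
  exact h1.congr (fun k => (heq k).symm)

lemma noconv : ¬ ∃ l : ℝ, Tendsto (fun n : ℕ => (wlen2 (gseq n) : ℝ) / 2 ^ n) atTop (𝓝 l) := by
  rintro ⟨l, hl⟩
  have hφe : Tendsto (fun k : ℕ => 2 * k + 2) atTop atTop :=
    tendsto_atTop_atTop.2 fun b => ⟨b, fun a ha => by omega⟩
  have hφo : Tendsto (fun k : ℕ => 2 * k + 1) atTop atTop :=
    tendsto_atTop_atTop.2 fun b => ⟨b, fun a ha => by omega⟩
  have he' : ∀ k, 3 * wlen2 (gseq (2 * k + 2)) = 5 * 2 ^ (2 * k + 2) + 1 := by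
    intro k
    have h := wlen2_gseq (2 * k + 1)
    have hidx : 2 * k + 1 + 1 = 2 * k + 2 := by ring
    rw [hidx, if_pos (show (2 * k + 2) % 2 = 0 by omega)] at h
    exact h
  have ho' : ∀ k, 3 * wlen2 (gseq (2 * k + 1)) = 4 * 2 ^ (2 * k + 1) + 1 := by
    intro k
    have h := wlen2_gseq (2 * k)
    rw [if_neg (show ¬ (2 * k + 1) % 2 = 0 by omega)] at h
    exact h
  have he := key 5 _ hφe he'
  have ho := key 4 _ hφo ho'
  have h1 : l = (5 : ℝ) / 3 := tendsto_nhds_unique (hl.comp hφe) (by norm_num at he ⊢; exact he)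
  have h2 : l = (4 : ℝ) / 3 := tendsto_nhds_unique (hl.comp hφo) (by norm_num at ho ⊢; exact ho)
  rw [h1] at h2
  norm_num at h2

/-- The sequence `z` in `T' × ℝ` converges in the cone topology of
`(T' × ℝ) ∪ ∂(T' × ℝ)` to the boundary point `[ζ, θ] ∈ ∂T' ∗ ∂ℝ`. -/
def ConvToBdry {T BT : Type*} [MetricSpace T] (TConv : (ℕ → T) → BT → Prop) (t₀ : T)
    (z : ℕ → T × ℝ) (ζ : BT) (θ : ℝ) : Prop :=
  TConv (fun n => (z n).1) ζ ∧
  Tendsto (fun n => dist t₀ (z n).1) atTop atTop ∧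
  Tendsto (fun n => (z n).2 / dist t₀ (z n).1) atTop (𝓝 (Real.tan θ))

theorem stmt17 {T BT : Type*} [MetricSpace T] [MulAction F2 T]
    (hiso : ∀ w : F2, Isometry (fun t : T => w • t))
    (t₀ : T)
    -- `T = T'` is the Cayley graph with `a`-edges of length `2` and `b`-edges of length `1`
    (hdist : ∀ w : F2, dist t₀ (w • t₀) = (wlen2 w : ℝ))
    -- abstract boundary `∂T'` with convergence predicate
    (TConv : (ℕ → T) → BT → Prop) :
    -- (1) the word length of `gₙ` is `2ⁿ`
    (∀ n : ℕ, 1 ≤ n → wlen (gseq n) = 2 ^ n) ∧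
    -- (2) `d_{T'}(1, gₙ) / 2ⁿ` does not converge
    (¬ ∃ l : ℝ, Tendsto (fun n : ℕ => dist t₀ (gseq n • t₀) / 2 ^ n) atTop (𝓝 l)) ∧
    -- (3) hence `ḡₙ y₀ = (gₙ t₀, 2ⁿ)` converges to no boundary point of `Y = T' × ℝ`
    (¬ ∃ (ζ : BT) (θ : ℝ),
      ConvToBdry TConv t₀ (fun n : ℕ => ((gseq n) • t₀, ((2:ℝ) ^ n))) ζ θ) := by
  
  have hfun : (fun n : ℕ => dist t₀ (gseq n • t₀) / 2 ^ n)
      = fun n : ℕ => (wlen2 (gseq n) : ℝ) / 2 ^ n := funext fun n => by rw [hdist]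
  refine ⟨fun n hn => wlen_gseq n hn, by rw [hfun]; exact noconv, ?_⟩
  rintro ⟨ζ, θ, -, -, ht⟩
  simp only [hdist] at ht
  -- tan θ is at least 1/2
  have hge : ∀ᶠ n : ℕ in atTop, (1:ℝ)/2 ≤ (2:ℝ) ^ n / (wlen2 (gseq n) : ℝ) := by
    rw [eventually_atTop]
    refine ⟨1, fun n hn => ?_⟩
    obtain ⟨m, rfl⟩ := Nat.exists_eq_add_of_le hn
    have h := wlen2_gseq m
    have h2 : 1 ≤ 2 ^ (m + 1) := Nat.one_le_two_pow
    rw [show 1 + m = m + 1 by ring]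
    have hle : wlen2 (gseq (m + 1)) ≤ 2 * 2 ^ (m + 1) := by
      by_cases hc : (m + 1) % 2 = 0 <;> simp [hc] at h <;> omega
    have hpos : 0 < wlen2 (gseq (m + 1)) := by
      by_cases hc : (m + 1) % 2 = 0 <;> simp [hc] at h <;> omega
    have hposR : (0:ℝ) < (wlen2 (gseq (m + 1)) : ℝ) := by exact_mod_cast hpos
    have hleR : (wlen2 (gseq (m + 1)) : ℝ) ≤ 2 * 2 ^ (m + 1) := by exact_mod_cast hle
    rw [le_div_iff₀ hposR]
    linarith
  have htan : (1:ℝ)/2 ≤ Real.tan θ := ge_of_tendsto ht hge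
  have hne : Real.tan θ ≠ 0 := by intro h0; rw [h0] at htan; norm_num at htan
  have hinv := ht.inv₀ hne
  have heq : (fun n : ℕ => ((2:ℝ) ^ n / (wlen2 (gseq n) : ℝ))⁻¹)
      = fun n : ℕ => (wlen2 (gseq n) : ℝ) / 2 ^ n := funext fun n => by rw [inv_div]
  rw [heq] at hinv
  exact noconv ⟨_, hinv⟩
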